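/- If 𝒜 is a family of subsets of {x_1,...,x_n}, \overline{𝒜} its contraction with equivalence classes y_1,...,y_m of sizes a_1,...,a_m and α = (a_1,...,a_m), then the expansion (\overline{𝒜})^α coincides with the family of maximal elements of 𝒜 up to a relabeling of the ground set. -/

import Mathlib

open Finset

/-- A set family is the collection of bases of a matroid: nonempty antichain
satisfying the basis exchange property. -/
def IsMatroidBases {γ : Type*} [DecidableEq γ] (ℬ : Set (Finset γ)) : Prop :=
  ℬ.Nonempty ∧
  (∀ B₁ ∈ ℬ, ∀ B₂ ∈ ℬ, B₁ ⊆ B₂ → B₁ = B₂) ∧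
  (∀ B₁ ∈ ℬ, ∀ B₂ ∈ ℬ, ∀ x ∈ B₁ \ B₂, ∃ y ∈ B₂ \ B₁, insert y (B₁.erase x) ∈ ℬ)

/-- The expansion of a family of subsets of `Fin n` with respect to `α`:
a subset `S` of the expanded ground set `Σ i, Fin (α i)` belongs to the
expansion iff it contains at most one copy of each element and its projection
belongs to the family. -/
def expansion {n : ℕ} (α : Fin n → ℕ) (𝒜 : Set (Finset (Fin n))) :
    Set (Finset (Σ i : Fin n, Fin (α i))) :=
  {S | S.image Sigma.fst ∈ 𝒜 ∧ S.card = (S.image Sigma.fst).card}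

/-- The deletion-link of an element `x` in a family `ℬ`: the collection of sets
obtained by removing `x` from the members of `ℬ` containing it. -/
def link {γ : Type*} [DecidableEq γ] (ℬ : Set (Finset γ)) (x : γ) : Set (Finset γ) :=
  {C | ∃ A ∈ ℬ, x ∈ A ∧ C = A.erase x}

/-- The maximal (with respect to inclusion) members of a family of finite sets. -/
def maximalMembers {γ : Type*} (𝒜 : Set (Finset γ)) : Set (Finset γ) :=
  {A ∈ 𝒜 | ∀ A' ∈ 𝒜, A ⊆ A' → A = A'}

lemma swap_mem {n : ℕ} (𝒜 : Set (Finset (Fin n))) {A : Finset (Fin n)} {x y : Fin n}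
    (hA : A ∈ maximalMembers 𝒜) (hx : x ∈ A)
    (h : link (maximalMembers 𝒜) x = link (maximalMembers 𝒜) y) :
    insert y (A.erase x) ∈ maximalMembers 𝒜 := by
  have h1 : A.erase x ∈ link (maximalMembers 𝒜) x := ⟨A, hA, hx, rfl⟩
  rw [h] at h1
  obtain ⟨B, hB, hyB, hBe⟩ := h1
  rw [hBe, Finset.insert_erase hyB]
  exact hB

lemma link_inj {n : ℕ} (𝒜 : Set (Finset (Fin n))) {A : Finset (Fin n)}
    (hA : A ∈ maximalMembers 𝒜) :
    ∀ x ∈ A, ∀ y ∈ A, link (maximalMembers 𝒜) x = link (maximalMembers 𝒜) y → x = y := by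
  intro x hx y hy h
  by_contra hne
  have hB := swap_mem 𝒜 hA hx h
  have heq : insert y (A.erase x) = A.erase x :=
    Finset.insert_eq_self.2 (Finset.mem_erase.2 ⟨Ne.symm hne, hy⟩)
  rw [heq] at hB
  have := hB.2 A hA.1 (Finset.erase_subset _ _)
  exact (Finset.erase_eq_self.1 this) hx

lemma replace_mem {n m : ℕ} (𝒜 : Set (Finset (Fin n))) (q : Fin n → Fin m)
    (hq : ∀ x y, q x = q y ↔ link (maximalMembers 𝒜) x = link (maximalMembers 𝒜) y) :
    ∀ k : ℕ, ∀ A A' : Finset (Fin n), (A \ A').card ≤ k →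
      A ∈ maximalMembers 𝒜 →
      (∀ x ∈ A', ∀ y ∈ A', q x = q y → x = y) →
      A'.image q = A.image q → A' ∈ maximalMembers 𝒜 := by
  intro k
  induction k with
  | zero =>
    intro A A' hcard hA hinj himg
    have hsub : A ⊆ A' := by
      intro z hz
      by_contra hz'
      have : z ∈ A \ A' := Finset.mem_sdiff.2 ⟨hz, hz'⟩
      have := Finset.card_pos.2 ⟨z, this⟩
      omega
    have hinjA : ∀ x ∈ A, ∀ y ∈ A, q x = q y → x = y := by
      intro x hx y hy hxy
      exact link_inj 𝒜 hA x hx y hy ((hq x y).1 hxy)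
    have hcA : (A.image q).card = A.card :=
      Finset.card_image_iff.2 (fun x hx y hy h => hinjA x hx y hy h)
    have hcA' : (A'.image q).card = A'.card :=
      Finset.card_image_iff.2 (fun x hx y hy h => hinj x hx y hy h)
    have : A = A' := Finset.eq_of_subset_of_card_le hsub (by rw [← hcA', himg, hcA])
    rwa [← this]
  | succ k ih =>
    intro A A' hcard hA hinj himg
    by_cases hsub : A ⊆ A'
    · have hinjA : ∀ x ∈ A, ∀ y ∈ A, q x = q y → x = y := by
        intro x hx y hy hxy
        exact link_inj 𝒜 hA x hx y hy ((hq x y).1 hxy)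
      have hcA : (A.image q).card = A.card :=
        Finset.card_image_iff.2 (fun x hx y hy h => hinjA x hx y hy h)
      have hcA' : (A'.image q).card = A'.card :=
        Finset.card_image_iff.2 (fun x hx y hy h => hinj x hx y hy h)
      have : A = A' := Finset.eq_of_subset_of_card_le hsub (by rw [← hcA', himg, hcA])
      rwa [← this]
    · obtain ⟨x, hxA, hxA'⟩ : ∃ x ∈ A, x ∉ A' := by
        rcases Finset.not_subset.1 hsub with ⟨x, hx1, hx2⟩; exact ⟨x, hx1, hx2⟩
      have hqx : q x ∈ A'.image q := by
        rw [himg]; exact Finset.mem_image_of_mem q hxA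
      obtain ⟨y, hyA', hqy⟩ := Finset.mem_image.1 hqx
      have hyA : y ∉ A := by
        intro hyA
        exact hxA' (link_inj 𝒜 hA y hyA x hxA ((hq y x).1 hqy) ▸ hyA')
      have hlink : link (maximalMembers 𝒜) x = link (maximalMembers 𝒜) y :=
        (hq x y).1 hqy.symm
      have hA₂ : insert y (A.erase x) ∈ maximalMembers 𝒜 := swap_mem 𝒜 hA hxA hlink
      have himg₂ : A'.image q = (insert y (A.erase x)).image q := by
        rw [himg, Finset.image_insert, hqy]
        conv_lhs => rw [← Finset.insert_erase hxA, Finset.image_insert]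
      have hcard₂ : ((insert y (A.erase x)) \ A').card ≤ k := by
        have hsub2 : (insert y (A.erase x)) \ A' ⊆ (A \ A').erase x := by
          intro z hz
          rw [Finset.mem_sdiff, Finset.mem_insert, Finset.mem_erase] at hz
          rcases hz with ⟨hz1, hz2⟩
          rcases hz1 with rfl | ⟨hzx, hzA⟩
          · exact absurd hyA' hz2
          · exact Finset.mem_erase.2 ⟨hzx, Finset.mem_sdiff.2 ⟨hzA, hz2⟩⟩
        have h1 := Finset.card_le_card hsub2
        have h2 : ((A \ A').erase x).card = (A \ A').card - 1 :=
          Finset.card_erase_of_mem (Finset.mem_sdiff.2 ⟨hxA, hxA'⟩)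
        have h3 : 0 < (A \ A').card := Finset.card_pos.2 ⟨x, Finset.mem_sdiff.2 ⟨hxA, hxA'⟩⟩
        omega
      exact ih (insert y (A.erase x)) A' hcard₂ hA₂ hinj himg₂

/-- the expansion of the contraction of `𝒜` (with respect to the
sizes of the equivalence classes) coincides, up to a relabeling of the ground
set, with the family of maximal elements of `𝒜`. -/
theorem stmt_11 {n : ℕ} (𝒜 : Set (Finset (Fin n))) :
    ∃ (m : ℕ) (q : Fin n → Fin m), Function.Surjective q ∧
      (∀ x y : Fin n, q x = q y ↔ link (maximalMembers 𝒜) x = link (maximalMembers 𝒜) y) ∧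
      ∃ e : Fin n ≃ (Σ i : Fin m, Fin ((Finset.univ.filter (fun x => q x = i)).card)),
        (∀ x, (e x).1 = q x) ∧
        (fun A : Finset (Fin n) => A.image e) '' (maximalMembers 𝒜)
          = expansion (fun i => (Finset.univ.filter (fun x => q x = i)).card)
              ((fun A : Finset (Fin n) => A.image q) '' (maximalMembers 𝒜)) := by
  classical
  let r : Fin n → Set (Finset (Fin n)) := fun x => link (maximalMembers 𝒜) x
  let s : Setoid (Fin n) := Setoid.ker r
  let m := Fintype.card (Quotient s)
  let φ : Quotient s ≃ Fin m := Fintype.equivFin _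
  set q : Fin n → Fin m := fun x => φ (Quotient.mk s x) with hqdef
  have hq : ∀ x y : Fin n, q x = q y ↔
      link (maximalMembers 𝒜) x = link (maximalMembers 𝒜) y := by
    intro x y
    constructor
    · intro h
      exact Quotient.eq.1 (φ.injective h)
    · intro h
      exact congrArg φ (Quotient.sound h)
  refine ⟨m, q, ?_, hq, ?_⟩
  · intro i
    exact ⟨(φ.symm i).out, by simp [hqdef]⟩
  · set e : Fin n ≃ (Σ i : Fin m, Fin ((Finset.univ.filter (fun x => q x = i)).card)) :=
      (Equiv.sigmaFiberEquiv q).symm.trans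
        (Equiv.sigmaCongrRight fun i => Fintype.equivFinOfCardEq (Fintype.card_subtype _))
      with hedef
    have he1 : ∀ x, (e x).1 = q x := fun x => rfl
    refine ⟨e, he1, ?_⟩
    ext S
    constructor
    · rintro ⟨A, hA, rfl⟩
      have himg : (A.image e).image Sigma.fst = A.image q := by
        rw [Finset.image_image]
        exact Finset.image_congr (fun x _ => he1 x)
      refine ⟨⟨A, hA, himg.symm ▸ rfl⟩, ?_⟩
      rw [himg]
      rw [Finset.card_image_of_injective _ e.injective]
      symm
      exact Finset.card_image_iff.2 (fun x hx y hy h =>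
        link_inj 𝒜 hA x hx y hy ((hq x y).1 h))
    · rintro ⟨⟨A, hA, hSA⟩, hScard⟩
      simp only at hSA
      refine ⟨S.image e.symm, ?_, ?_⟩
      · have himgA' : (S.image e.symm).image q = A.image q := by
          rw [Finset.image_image, hSA]
          refine Finset.image_congr (fun z _ => ?_)
          show q (e.symm z) = z.1
          rw [← he1 (e.symm z), e.apply_symm_apply]
        have hfstinj :=
          Finset.card_image_iff.1 hScard.symm
        have hinj : ∀ x ∈ S.image e.symm, ∀ y ∈ S.image e.symm, q x = q y → x = y := by
          intro x hx y hy hxy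
          obtain ⟨a, ha, rfl⟩ := Finset.mem_image.1 hx
          obtain ⟨b, hb, rfl⟩ := Finset.mem_image.1 hy
          have hqa : q (e.symm a) = a.1 := by
            rw [← he1 (e.symm a), e.apply_symm_apply]
          have hqb : q (e.symm b) = b.1 := by
            rw [← he1 (e.symm b), e.apply_symm_apply]
          have : a.1 = b.1 := by rw [← hqa, ← hqb, hxy]
          exact congrArg e.symm (hfstinj ha hb this)
        exact replace_mem 𝒜 q hq (A \ S.image e.symm).card A (S.image e.symm)
          le_rfl hA hinj himgA'
      · show (S.image e.symm).image e = S
        rw [Finset.image_image]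
        simp
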